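/- Let K be an algebraically closed field equipped with a nontrivial non-archimedean absolute value |·|. Let g ∈ K[z] be a polynomial with g(0) = 0 and g'(0) = 0 (where g' denotes the formal derivative). Let M ≥ 1 be a real number such that |g(z)| ≤ M·|z| for every z ∈ K with |z| < 1/M. Then for every z ∈ K with |z| < 1/M, one has |g(z)| ≤ M²·|z|². -/

import Mathlib

open Polynomial
open Polynomial

-- ultrametric equality
lemma stmt11_ultra_eq {K : Type*} [Field K] (v : AbsoluteValue K ℝ)
    (hna : ∀ x y : K, v (x + y) ≤ max (v x) (v y))
    {x y : K} (h : v y < v x) : v (x + y) = v x := by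
  refine le_antisymm ((hna x y).trans (max_le le_rfl h.le)) ?_
  by_contra hlt
  push_neg at hlt
  have h2 : v x ≤ max (v (x + y)) (v y) := by
    have := hna (x + y) (-y)
    simpa using this
  rcases max_cases (v (x + y)) (v y) with ⟨he, _⟩ | ⟨he, _⟩ <;> rw [he] at h2 <;> linarith

lemma stmt11_ultra_sub {K : Type*} [Field K] (v : AbsoluteValue K ℝ)
    (hna : ∀ x y : K, v (x + y) ≤ max (v x) (v y))
    {x y : K} (h : v x ≠ v y) : v (x - y) = max (v x) (v y) := by
  rcases lt_or_gt_of_ne h with hlt | hlt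
  · have : v (-y + x) = v (-y) := stmt11_ultra_eq v hna (by simpa using hlt)
    rw [max_eq_right hlt.le]
    calc v (x - y) = v (-y + x) := by ring_nf
    _ = v (-y) := this
    _ = v y := by simp
  · rw [max_eq_left hlt.le, sub_eq_add_neg]
    exact stmt11_ultra_eq v hna (by simpa using hlt)

-- density of values
lemma stmt11_dense {K : Type*} [Field K] [IsAlgClosed K] (v : AbsoluteValue K ℝ)
    (hnt : ∃ x : K, v x ≠ 0 ∧ v x ≠ 1)
    {a b : ℝ} (ha : 0 < a) (hab : a < b) : ∃ w : K, a < v w ∧ v w < b := by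
  -- get u with 1 < v u
  obtain ⟨x, hx0, hx1⟩ := hnt
  have hxne : x ≠ 0 := fun h => hx0 (by simp [h])
  have hvx : 0 < v x := v.pos hxne
  obtain ⟨u, hu⟩ : ∃ u : K, 1 < v u := by
    rcases lt_or_gt_of_ne hx1 with h | h
    · refine ⟨x⁻¹, ?_⟩
      rw [map_inv₀]
      exact one_lt_inv₀ hvx |>.mpr h
    · exact ⟨x, h⟩
  have hvu : (0:ℝ) < v u := lt_trans one_pos hu
  have hlogu : 0 < Real.log (v u) := Real.log_pos hu
  obtain ⟨q, hq1, hq2⟩ := exists_rat_btwn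
    (div_lt_div_of_pos_right (Real.log_lt_log ha hab) hlogu)
  -- realize (v u) ^ q in the value group
  have hden : (0:ℕ) < q.den := q.pos
  obtain ⟨y, hy⟩ := IsAlgClosed.exists_pow_nat_eq (u ^ (q.num)) hden
  have hune : u ≠ 0 := fun h => by simp [h] at hu; linarith
  have hyv : v y ^ q.den = v u ^ q.num := by
    rw [← map_pow, hy, map_zpow₀]
  have hyne : y ≠ 0 := by
    intro h
    rw [h] at hy
    exact (zpow_ne_zero q.num hune) (by simpa using hy.symm)
  have hvy : 0 < v y := v.pos hyne
  have key : v y = (v u) ^ (q : ℝ) := by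
    have h1 : ((v u) ^ (q:ℝ)) ^ q.den = v u ^ q.num := by
      rw [← Real.rpow_natCast ((v u) ^ (q:ℝ)) q.den, ← Real.rpow_mul hvu.le]
      rw [← Real.rpow_intCast (v u) q.num]
      congr 1
      have := Rat.num_div_den q
      have h2 : (q:ℝ) = (q.num : ℝ) / (q.den : ℝ) := by exact_mod_cast congrArg (Rat.cast (K := ℝ)) this.symm
      rw [h2, div_mul_cancel₀]
      exact_mod_cast q.den_pos.ne'
    have h0 : (0:ℝ) ≤ (v u) ^ (q:ℝ) := (Real.rpow_pos_of_pos hvu _).le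
    refine (pow_left_strictMonoOn₀ (n := q.den) q.den_pos.ne').injOn hvy.le h0 ?_
    rw [hyv, h1]
  refine ⟨y, ?_, ?_⟩
  · rw [key, ← Real.rpow_logb hvu (ne_of_gt hu) ha]
    rw [Real.rpow_lt_rpow_left_iff hu]
    rwa [Real.log_div_log] at hq1
  · rw [key, ← Real.rpow_logb hvu (ne_of_gt hu) (lt_trans ha hab)]
    rw [Real.rpow_lt_rpow_left_iff hu]
    rwa [Real.log_div_log] at hq2


lemma stmt11_prod_le {α : Type*} (s : Multiset α) (f g : α → ℝ)
    (h0 : ∀ a ∈ s, 0 ≤ f a) (h : ∀ a ∈ s, f a ≤ g a) :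
    (s.map f).prod ≤ (s.map g).prod := by
  induction s using Multiset.induction with
  | empty => simp
  | cons a s ih =>
    simp only [Multiset.map_cons, Multiset.prod_cons]
    have hfa := h0 a (Multiset.mem_cons_self a s)
    have hfs : (0:ℝ) ≤ (s.map f).prod := by
      refine Multiset.prod_nonneg ?_
      intro x hx
      obtain ⟨b, hb, rfl⟩ := Multiset.mem_map.mp hx
      exact h0 b (Multiset.mem_cons_of_mem hb)
    exact mul_le_mul (h a (Multiset.mem_cons_self a s))
      (ih (fun b hb => h0 b (Multiset.mem_cons_of_mem hb))
          (fun b hb => h b (Multiset.mem_cons_of_mem hb))) hfs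
      (hfa.trans (h a (Multiset.mem_cons_self a s)))

lemma stmt11_abs_prod {K : Type*} [Field K] (v : AbsoluteValue K ℝ)
    (s : Multiset K) : v s.prod = (s.map v).prod := by
  induction s using Multiset.induction with
  | empty => simp
  | cons a s ih => simp [ih]

-- eval of a polynomial via its roots, in absolute value
lemma stmt11_eval_abs {K : Type*} [Field K] [IsAlgClosed K] (v : AbsoluteValue K ℝ)
    (h : Polynomial K) (u : K) :
    v (h.eval u) = v h.leadingCoeff * (h.roots.map (fun β => v (u - β))).prod := by
  conv_lhs => rw [(IsAlgClosed.splits h).eq_prod_roots]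
  rw [eval_mul, eval_C, map_mul, eval_multiset_prod, Multiset.map_map]
  congr 1
  rw [stmt11_abs_prod, Multiset.map_map]
  congr 1
  ext β
  simp

/-- Let `K` be an algebraically closed field with a nontrivial non-archimedean
absolute value. Let `g ∈ K[z]` with `g(0) = 0` and `g'(0) = 0`, and let `M ≥ 1` be such that
`|g(z)| ≤ M·|z|` for every `z` with `|z| < 1/M`. Then for every `z` with `|z| < 1/M`,
`|g(z)| ≤ M²·|z|²`. -/

theorem stmt11 (K : Type*) [Field K] [IsAlgClosed K] (v : AbsoluteValue K ℝ)
    (hna : ∀ x y : K, v (x + y) ≤ max (v x) (v y))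
    (hnt : ∃ x : K, v x ≠ 0 ∧ v x ≠ 1)
    (g : Polynomial K) (hg0 : g.eval 0 = 0)
    (hg'0 : (Polynomial.derivative g).eval 0 = 0)
    (M : ℝ) (hM : 1 ≤ M)
    (hb : ∀ z : K, v z < 1 / M → v (g.eval z) ≤ M * v z) :
    ∀ z : K, v z < 1 / M → v (g.eval z) ≤ M ^ 2 * (v z) ^ 2 := by
  have hM0 : (0:ℝ) < M := lt_of_lt_of_le one_pos hM
  obtain ⟨h, rfl⟩ : X ^ 2 ∣ g := by
    rw [Polynomial.X_pow_dvd_iff]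
    intro d hd
    interval_cases d
    · rwa [Polynomial.coeff_zero_eq_eval_zero]
    · have h1 := Polynomial.coeff_derivative g 0
      rw [Polynomial.coeff_zero_eq_eval_zero, hg'0] at h1
      simpa using h1.symm
  intro z hz
  rcases eq_or_ne z 0 with rfl | hzne
  · simp
  have hvz : 0 < v z := v.pos hzne
  by_contra hcon
  push_neg at hcon
  set vg := v ((X ^ 2 * h).eval z) with hvgdef
  have hvg0 : 0 < vg := lt_of_le_of_lt (by positivity) hcon
  set R := h.roots with hR
  set c := h.leadingCoeff with hc
  -- choice of radius
  set a : ℝ := max (v z) (M * (v z) ^ 2 / vg) with ha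
  set S' : Finset ℝ := ((R.map v).toFinset).filter (· < 1 / M) with hS'
  set a' : ℝ := S'.fold max a id with ha'
  have ha_lt : a < 1 / M := by
    apply max_lt hz
    rw [div_lt_div_iff₀ hvg0 hM0]
    nlinarith
  have ha'_lt : a' < 1 / M := by
    rw [ha', Finset.fold_max_lt]
    refine ⟨ha_lt, ?_⟩
    intro x hx
    simpa using (Finset.mem_filter.mp hx).2
  have ha_le : a ≤ a' := by
    rw [ha', Finset.le_fold_max]
    exact Or.inl le_rfl
  have ha'0 : 0 < a' := lt_of_lt_of_le (lt_of_lt_of_le hvz (le_max_left _ _)) ha_le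
  obtain ⟨w, hw1, hw2⟩ := stmt11_dense v hnt ha'0 ha'_lt
  have hr0 : 0 < v w := lt_trans ha'0 hw1
  have hvz_le : v z ≤ v w := le_trans (le_trans (le_max_left _ _) ha_le) hw1.le
  -- v w avoids all |roots|
  have hrS : ∀ β ∈ R, v β ≠ v w := by
    intro β hβ
    rcases lt_or_ge (v β) (1 / M) with hlt | hle
    · have hmem : v β ∈ S' := by
        rw [hS', Finset.mem_filter]
        exact ⟨Multiset.mem_toFinset.mpr (Multiset.mem_map_of_mem v hβ), hlt⟩
      have : v β ≤ a' := by
        rw [ha', Finset.le_fold_max]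
        exact Or.inr ⟨v β, hmem, le_rfl⟩
      exact ne_of_lt (lt_of_le_of_lt this hw1)
    · exact ne_of_gt (lt_of_lt_of_le hw2 hle)
  -- bound at z
  have h1 : v (h.eval z) ≤ v c * (R.map (fun β => max (v w) (v β))).prod := by
    rw [stmt11_eval_abs v h z]
    refine mul_le_mul_of_nonneg_left ?_ (v.nonneg c)
    refine stmt11_prod_le R _ _ (fun β _ => v.nonneg _) ?_
    intro β _
    have : v (z - β) ≤ max (v z) (v β) := by
      have := hna z (-β)
      simpa [sub_eq_add_neg] using this
    exact this.trans (max_le_max hvz_le le_rfl)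
  -- equality at w
  have h2 : v (h.eval w) = v c * (R.map (fun β => max (v w) (v β))).prod := by
    rw [stmt11_eval_abs v h w]
    congr 1
    refine congrArg Multiset.prod (Multiset.map_congr rfl ?_)
    intro β hβ
    exact stmt11_ultra_sub v hna (Ne.symm (hrS β hβ))
  -- use hypothesis at w
  have h3 : v w ^ 2 * v (h.eval w) ≤ M * v w := by
    have := hb w hw2
    rwa [eval_mul, eval_pow, eval_X, map_mul, map_pow] at this
  have h4 : v (h.eval w) ≤ M / v w := by
    rw [le_div_iff₀ hr0]
    nlinarith [v.nonneg (h.eval w)]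
  -- combine
  have h5 : vg = v z ^ 2 * v (h.eval z) := by
    rw [hvgdef, eval_mul, eval_pow, eval_X, map_mul, map_pow]
  have h6 : vg ≤ v z ^ 2 * (M / v w) := by
    rw [h5]
    refine mul_le_mul_of_nonneg_left ?_ (by positivity)
    exact (h1.trans_eq h2.symm).trans h4
  have h7 : M * (v z) ^ 2 / vg < v w :=
    lt_of_le_of_lt (le_trans (le_max_right _ _) ha_le) hw1
  rw [div_lt_iff₀ hvg0] at h7
  have h6' : vg * v w ≤ v z ^ 2 * M := by
    rw [← le_div_iff₀ hr0]
    convert h6 using 1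
    · rfl
    ring
  nlinarith
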